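/- With surface symbol O = c(a₁a₂ā₁ā₂a₃a₄ā₃ā₄), the set LP₂(c(a₁ā₃), c(a₂ā₄)) has exactly four elements: (a₁ā₃, a₂ā₄), (a₁ā₃, ā₄a₂), (ā₃a₁, a₂ā₄), (ā₃a₁, ā₄a₂); in particular the upper bound len(V)·len(W) = 4 of the counting proposition is attained. -/

import Mathlib

/-!
Combinatorial model of the Goldman–Turaev Lie bialgebra of curves on a surface
with boundary, following M. Chas, "Combinatorial Lie bialgebras of curves on
surfaces".

The alphabet `𝔸ₙ = {a₁,…,aₙ, ā₁,…,āₙ}` is modelled by `Letter n := Fin n × Bool`,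
with the bar involution flipping the boolean.  Linear words are lists of letters;
a cyclic word is a list up to rotation (`List.IsRotated`).
-/

open List

abbrev Letter (n : ℕ) := Fin n × Bool

namespace ChasCW

variable {n : ℕ}

/-- The bar involution `x ↦ x̄` on letters. -/
def bar (x : Letter n) : Letter n := (x.1, !x.2)

/-- The formal inverse `W̄` of a linear word `W`. -/
def wordInv (w : List (Letter n)) : List (Letter n) := (w.map bar).reverse

/-- A linear word is freely reduced if no letter is followed by its inverse. -/
def Reduced (w : List (Letter n)) : Prop := w.Chain' (fun a b => b ≠ bar a)

/-- A nonempty word all of whose cyclic rotations are freely reduced: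
a representative of a reduced cyclic word. -/
def CyclicallyReduced (w : List (Letter n)) : Prop :=
  w ≠ [] ∧ ∀ i, Reduced (w.rotate i)

/-- The type of cyclic words: lists of letters up to rotation. -/
abbrev CWord (n : ℕ) := Quotient (List.IsRotated.setoid (Letter n))

/-- The cyclic word `c(w)` determined by a linear word `w`. -/
def cw (w : List (Letter n)) : CWord n := Quotient.mk _ w

/-- A surface symbol: a reduced cyclic word containing every letter of the
alphabet exactly once. -/
def SurfaceSymbol (O : List (Letter n)) : Prop :=
  CyclicallyReduced O ∧ ∀ x : Letter n, O.count x = 1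

/-- `w` embeds injectively and orientation-preservingly as a cyclic subsequence
of the cyclic word `O`. -/
def CyclicEmbeds (w O : List (Letter n)) : Prop :=
  w.Nodup ∧ ∃ i ≤ w.length, ∃ j ≤ O.length, (w.rotate i).Sublist (O.rotate j)

open Classical in
/-- The orientation `o(w) ∈ {-1,0,1}` of a cyclic word relative to the surface
symbol `O`: `1` for an orientation-preserving embedding of rings, `-1` for an
orientation-reversing one, `0` otherwise. -/
noncomputable def orient (O w : List (Letter n)) : ℤ :=
  if CyclicEmbeds w O then 1 else if CyclicEmbeds w O.reverse then -1 else 0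

/-- Case (1) of Definition 2.1: `P = p₁p₂`, `Q = q₁q₂` and
`o(c(p̄₁q̄₁p₂q₂)) ≠ 0`. -/
def Linked1 (O : List (Letter n)) (p₁ p₂ q₁ q₂ : Letter n) : Prop :=
  Reduced [p₁, p₂] ∧ Reduced [q₁, q₂] ∧ orient O [bar p₁, bar q₁, p₂, q₂] ≠ 0

/-- Case (2) of Definition 2.1: `P = p₁Yp₂`, `Q = q₁Yq₂`, `p₁ ≠ q₁`, `p₂ ≠ q₂`,
`Y = x₁X x₂` nonempty, and `o(c(p̄₁q̄₁x₁)) = o(c(p₂q₂x̄₂))`. -/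
def Linked2 (O : List (Letter n)) (p₁ p₂ q₁ q₂ x₁ x₂ : Letter n)
    (Y : List (Letter n)) : Prop :=
  Y ≠ [] ∧ Y.head? = some x₁ ∧ Y.getLast? = some x₂ ∧
  p₁ ≠ q₁ ∧ p₂ ≠ q₂ ∧
  Reduced (p₁ :: (Y ++ [p₂])) ∧ Reduced (q₁ :: (Y ++ [q₂])) ∧
  orient O [bar p₁, bar q₁, x₁] = orient O [p₂, q₂, bar x₂]

/-- Case (3) of Definition 2.1: `P = p₁Yp₂`, `Q = q₁Ȳq₂`, `p₁ ≠ q̄₂`, `p₂ ≠ q̄₁`,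
`Y = x₁X x₂` nonempty, and `o(c(q₂p̄₁x₁)) = o(c(q̄₁p₂x̄₂))`. -/
def Linked3 (O : List (Letter n)) (p₁ p₂ q₁ q₂ x₁ x₂ : Letter n)
    (Y : List (Letter n)) : Prop :=
  Y ≠ [] ∧ Y.head? = some x₁ ∧ Y.getLast? = some x₂ ∧
  p₁ ≠ bar q₂ ∧ p₂ ≠ bar q₁ ∧
  Reduced (p₁ :: (Y ++ [p₂])) ∧ Reduced (q₁ :: (wordInv Y ++ [q₂])) ∧
  orient O [q₂, bar p₁, x₁] = orient O [bar q₁, p₂, bar x₂]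

/-- `(P,Q)` is an `O`-linked pair (Definition 2.1). -/
def LinkedPair (O P Q : List (Letter n)) : Prop :=
  (∃ p₁ p₂ q₁ q₂, P = [p₁, p₂] ∧ Q = [q₁, q₂] ∧ Linked1 O p₁ p₂ q₁ q₂) ∨
  (∃ p₁ p₂ q₁ q₂ x₁ x₂ Y, P = p₁ :: (Y ++ [p₂]) ∧ Q = q₁ :: (Y ++ [q₂]) ∧
    Linked2 O p₁ p₂ q₁ q₂ x₁ x₂ Y) ∨
  (∃ p₁ p₂ q₁ q₂ x₁ x₂ Y, P = p₁ :: (Y ++ [p₂]) ∧ Q = q₁ :: (wordInv Y ++ [q₂]) ∧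
    Linked3 O p₁ p₂ q₁ q₂ x₁ x₂ Y)

/-- The sign of a linked pair `(P,Q)`, computed from the (unique) decomposition
of `P` and `Q` prescribed by Definition 2.1. -/
noncomputable def signLP (O P Q : List (Letter n)) : ℤ :=
  match P, Q with
  | p₁ :: P', q₁ :: Q' =>
    match P'.getLast?, Q'.getLast? with
    | some p₂, some q₂ =>
      let Y := P'.dropLast
      let Z := Q'.dropLast
      if Y = [] then orient O [bar p₁, bar q₁, p₂, q₂]
      else
        match Y.head?, Y.getLast? with
        | some x₁, some _ =>
          if Z = wordInv Y then orient O [q₂, bar p₁, x₁]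
          else orient O [bar p₁, bar q₁, x₁]
        | _, _ => 0
    | _, _ => 0
  | _, _ => 0

/-- The subword of length `l` of (a large power of) the cyclic word `V`,
starting at position `i`.  This encodes occurrences of subwords of powers
of `V`. -/
def segment (V : List (Letter n)) (i l : ℕ) : List (Letter n) :=
  (((List.replicate (l + 1) V).flatten).rotate i).take l

/-- The set `LP₁(W)` of linked pairs of occurrences of subwords of `W`,
an occurrence being encoded by its starting position and its length. -/
def LP1 (O W : List (Letter n)) : Set ((ℕ × ℕ) × (ℕ × ℕ)) :=
  {e | e.1.1 < W.length ∧ e.2.1 < W.length ∧ e.1.2 ≤ W.length ∧ e.2.2 ≤ W.length ∧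
    LinkedPair O (segment W e.1.1 e.1.2) (segment W e.2.1 e.2.2)}

/-- The set `LP₂(V,W)` of linked pairs of the pair of cyclic words `(V,W)`:
pairs of occurrences of subwords of powers of `V` resp. `W` which are linked.
(The normalization `len V^{j-1} < len P ≤ len V^j` is implicit in the encoding
of an occurrence by a starting position `< len V` and a length.) -/
def LP2 (O V W : List (Letter n)) : Set ((ℕ × ℕ) × (ℕ × ℕ)) :=
  {e | e.1.1 < V.length ∧ e.2.1 < W.length ∧
    LinkedPair O (segment V e.1.1 e.1.2) (segment W e.2.1 e.2.2)}

end ChasCW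


namespace ChasCW

instance {n : ℕ} (w : List (Letter n)) : Decidable (Reduced w) :=
  inferInstanceAs (Decidable (w.IsChain (fun a b => b ≠ bar a)))

lemma reduced_pair {n : ℕ} {x y : Letter n} (h : y ≠ bar x) : Reduced [x, y] :=
  List.isChain_pair.mpr h

lemma mem_of_mem_segment {n : ℕ} {V : List (Letter n)} {i l : ℕ} {x : Letter n}
    (h : x ∈ segment V i l) : x ∈ V := by
  have h1 := List.mem_of_mem_take h
  rw [List.mem_rotate, List.mem_flatten] at h1
  obtain ⟨L, hL, hx⟩ := h1
  rwa [List.eq_of_mem_replicate hL] at hx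

lemma segment_length {n : ℕ} {V : List (Letter n)} (hV : V ≠ []) (i l : ℕ) :
    (segment V i l).length = l := by
  have hv : 1 ≤ V.length := List.length_pos_iff.mpr hV
  simp only [segment, List.length_take, List.length_rotate, List.length_flatten,
    List.map_replicate, List.sum_replicate, smul_eq_mul]
  have : l ≤ (l + 1) * V.length := by nlinarith
  omega

lemma orient_ne_zero {n : ℕ} {O w : List (Letter n)}
    (h : CyclicEmbeds w O ∨ CyclicEmbeds w O.reverse) : orient O w ≠ 0 := by
  rcases h with h | h
  · simp [orient, h]
  · by_cases h' : CyclicEmbeds w O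
    · simp [orient, h']
    · simp [orient, h, h']

end ChasCW

namespace ChasCW

/-- Example 2.8, second part: with surface symbol
`O = c(a₁a₂ā₁ā₂a₃a₄ā₃ā₄)`, the set `LP₂(c(a₁ā₃), c(a₂ā₄))` consists of exactly
the four linked pairs `(a₁ā₃, a₂ā₄)`, `(a₁ā₃, ā₄a₂)`, `(ā₃a₁, a₂ā₄)`,
`(ā₃a₁, ā₄a₂)` (encoded by their occurrences); in particular the upper bound
`len V · len W = 4` of Proposition 2.7(a) is attained. -/
theorem LP2_example_four_elements :
    let a : Fin 4 → Letter 4 := fun i => (i, true)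
    let O : List (Letter 4) :=
      [a 0, a 1, bar (a 0), bar (a 1), a 2, a 3, bar (a 2), bar (a 3)]
    let V : List (Letter 4) := [a 0, bar (a 2)]
    let W : List (Letter 4) := [a 1, bar (a 3)]
    segment V 0 2 = [a 0, bar (a 2)] ∧ segment V 1 2 = [bar (a 2), a 0] ∧
    segment W 0 2 = [a 1, bar (a 3)] ∧ segment W 1 2 = [bar (a 3), a 1] ∧
    LP2 O V W =
      {((0, 2), (0, 2)), ((0, 2), (1, 2)), ((1, 2), (0, 2)), ((1, 2), (1, 2))} ∧
    (LP2 O V W).ncard = V.length * W.length := by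
  intro a O V W
  have hseg1 : segment V 0 2 = [a 0, bar (a 2)] := by decide
  have hseg2 : segment V 1 2 = [bar (a 2), a 0] := by decide
  have hseg3 : segment W 0 2 = [a 1, bar (a 3)] := by decide
  have hseg4 : segment W 1 2 = [bar (a 3), a 1] := by decide
  have hVne : V ≠ [] := by decide
  have hWne : W ≠ [] := by decide
  -- any letter of V has first coordinate 0 or 2; of W, 1 or 3
  have hVW : ∀ x : Letter 4, x ∈ V → x ∈ W → False := by decide
  have hVW' : ∀ x : Letter 4, x ∈ V → bar x ∈ W → False := by decide
  have hmain : LP2 O V W =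
      {((0, 2), (0, 2)), ((0, 2), (1, 2)), ((1, 2), (0, 2)), ((1, 2), (1, 2))} := by
    ext ⟨⟨i, l⟩, ⟨j, m⟩⟩
    simp only [LP2, Set.mem_setOf_eq, Set.mem_insert_iff, Set.mem_singleton_iff,
      Prod.mk.injEq]
    constructor
    · rintro ⟨hi, hj, hlp⟩
      have hl2 : l = 2 ∧ m = 2 := by
        rcases hlp with ⟨p₁, p₂, q₁, q₂, hP, hQ, _⟩ |
          ⟨p₁, p₂, q₁, q₂, x₁, x₂, Y, hP, hQ, hY, hh, _⟩ |
          ⟨p₁, p₂, q₁, q₂, x₁, x₂, Y, hP, hQ, hY, hh, _⟩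
        · constructor
          · have := segment_length hVne i l; rw [hP] at this; simpa using this.symm
          · have := segment_length hWne j m; rw [hQ] at this; simpa using this.symm
        · exfalso
          have hx₁Y : x₁ ∈ Y := List.mem_of_mem_head? hh
          have hx1 : x₁ ∈ segment V i l := by
            rw [hP]; exact List.mem_cons_of_mem _ (List.mem_append_left _ hx₁Y)
          have hx2 : x₁ ∈ segment W j m := by
            rw [hQ]; exact List.mem_cons_of_mem _ (List.mem_append_left _ hx₁Y)
          exact hVW x₁ (mem_of_mem_segment hx1) (mem_of_mem_segment hx2)
        · exfalso
          have hx₁Y : x₁ ∈ Y := List.mem_of_mem_head? hh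
          have hx1 : x₁ ∈ segment V i l := by
            rw [hP]; exact List.mem_cons_of_mem _ (List.mem_append_left _ hx₁Y)
          have hx2 : bar x₁ ∈ segment W j m := by
            rw [hQ]
            refine List.mem_cons_of_mem _ (List.mem_append_left _ ?_)
            simp only [wordInv, List.mem_reverse, List.mem_map]
            exact ⟨x₁, hx₁Y, rfl⟩
          exact hVW' x₁ (mem_of_mem_segment hx1) (mem_of_mem_segment hx2)
      obtain ⟨rfl, rfl⟩ := hl2
      have hi' : i = 0 ∨ i = 1 := by
        rw [show V.length = 2 from rfl] at hi; omega
      have hj' : j = 0 ∨ j = 1 := by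
        rw [show W.length = 2 from rfl] at hj; omega
      rcases hi' with rfl | rfl <;> rcases hj' with rfl | rfl <;> simp
    · have e1 : CyclicEmbeds [bar (a 0), bar (a 1), bar (a 2), bar (a 3)] O := by
        refine ⟨by decide, 0, by norm_num, 0, by decide, by decide⟩
      have e2 : CyclicEmbeds [bar (a 0), a 3, bar (a 2), a 1] O := by
        refine ⟨by decide, 0, by norm_num, 2, by decide, by decide⟩
      have e3 : CyclicEmbeds [a 2, bar (a 1), a 0, bar (a 3)] O.reverse := by
        refine ⟨by decide, 0, by norm_num, 3, by decide, by decide⟩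
      have e4 : CyclicEmbeds [a 2, a 3, a 0, a 1] O := by
        refine ⟨by decide, 0, by norm_num, 4, by decide, by decide⟩
      rintro (⟨⟨rfl, rfl⟩, ⟨rfl, rfl⟩⟩ | ⟨⟨rfl, rfl⟩, ⟨rfl, rfl⟩⟩ |
        ⟨⟨rfl, rfl⟩, ⟨rfl, rfl⟩⟩ | ⟨⟨rfl, rfl⟩, ⟨rfl, rfl⟩⟩) <;>
        refine ⟨by decide, by decide, Or.inl ?_⟩
      · rw [hseg1, hseg3]
        exact ⟨_, _, _, _, rfl, rfl, reduced_pair (by decide), reduced_pair (by decide), orient_ne_zero (Or.inl e1)⟩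
      · rw [hseg1, hseg4]
        exact ⟨_, _, _, _, rfl, rfl, reduced_pair (by decide), reduced_pair (by decide), orient_ne_zero (Or.inl e2)⟩
      · rw [hseg2, hseg3]
        exact ⟨_, _, _, _, rfl, rfl, reduced_pair (by decide), reduced_pair (by decide), orient_ne_zero (Or.inr e3)⟩
      · rw [hseg2, hseg4]
        exact ⟨_, _, _, _, rfl, rfl, reduced_pair (by decide), reduced_pair (by decide), orient_ne_zero (Or.inl e4)⟩
  refine ⟨hseg1, hseg2, hseg3, hseg4, hmain, ?_⟩
  rw [hmain]
  rw [show (V.length * W.length : ℕ) = 4 by decide]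
  rw [Set.ncard_insert_of_notMem (by simp), Set.ncard_insert_of_notMem (by simp),
    Set.ncard_insert_of_notMem (by simp), Set.ncard_singleton]


end ChasCW
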